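/- Let E be a monotonically complete Banach lattice with the Fatou property and (T_i)_{i∈I} a mutually commuting family of positive linear contractions on E. Then the common fixed space F, equipped with the order and norm inherited from E and with its own lattice operations, is itself monotonically complete and has the Fatou property; in particular F is Dedekind complete. -/

import Mathlib

section Aux

variable {E : Type*} [NormedAddCommGroup E] [Lattice E] [HasSolidNorm E] [IsOrderedAddMonoid E] [NormedSpace ℝ E]
variable {I : Type*}

/-- Composition of the operators `T i` along a list. -/
def apF (T : I → E →L[ℝ] E) : List I → E → E
  | [], x => x
  | i :: l, x => T i (apF T l x)

variable (T : I → E →L[ℝ] E)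

lemma T_mono (hpos : ∀ i, ∀ x : E, 0 ≤ x → 0 ≤ T i x) (i : I) :
    Monotone (T i) := fun a b hab => by
  have h := hpos i (b - a) (sub_nonneg.2 hab)
  rw [map_sub] at h
  exact sub_nonneg.1 h

lemma apF_mono (hpos : ∀ i, ∀ x : E, 0 ≤ x → 0 ≤ T i x) (l : List I) :
    Monotone (apF T l) := by
  induction l with
  | nil => exact fun a b h => h
  | cons i l ih => exact fun a b h => T_mono T hpos i (ih h)

lemma apF_norm (hcontr : ∀ i, ‖T i‖ ≤ 1) (l : List I) (x : E) :
    ‖apF T l x‖ ≤ ‖x‖ := by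
  induction l with
  | nil => exact le_refl _
  | cons i l ih =>
    calc ‖T i (apF T l x)‖ ≤ ‖T i‖ * ‖apF T l x‖ := (T i).le_opNorm _
    _ ≤ 1 * ‖x‖ := mul_le_mul (hcontr i) ih (norm_nonneg _) zero_le_one
    _ = ‖x‖ := one_mul _

lemma apF_fixed {h : E} (hfix : ∀ i, T i h = h) (l : List I) :
    apF T l h = h := by
  induction l with
  | nil => rfl
  | cons i l ih => simp [apF, ih, hfix i]

lemma apF_comm (hcomm : ∀ i j, (T i).comp (T j) = (T j).comp (T i))
    (i : I) (l : List I) (x : E) :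
    T i (apF T l x) = apF T l (T i x) := by
  induction l with
  | nil => rfl
  | cons j l ih =>
    have hsw := ContinuousLinearMap.ext_iff.1 (hcomm i j) (apF T l x)
    simp only [ContinuousLinearMap.comp_apply] at hsw
    simp only [apF, hsw, ih]

lemma apF_ge (hpos : ∀ i, ∀ x : E, 0 ≤ x → 0 ≤ T i x) {x : E}
    (hx : ∀ i, x ≤ T i x) (l : List I) : x ≤ apF T l x := by
  induction l with
  | nil => exact le_refl x
  | cons i l ih => exact le_trans (hx i) (T_mono T hpos i ih)

lemma apF_le (hpos : ∀ i, ∀ x : E, 0 ≤ x → 0 ≤ T i x) {x : E}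
    (hx : ∀ i, T i x ≤ x) (l : List I) : apF T l x ≤ x := by
  induction l with
  | nil => exact le_refl x
  | cons i l ih => exact le_trans (T_mono T hpos i ih) (hx i)

lemma apF_append (l l' : List I) (x : E) :
    apF T (l ++ l') x = apF T l (apF T l' x) := by
  induction l with
  | nil => rfl
  | cons i l ih => simp [apF, ih]

omit [NormedSpace ℝ E] in
/-- In a lattice-normed group, `0 ≤ a ≤ b` implies `‖a‖ ≤ ‖b‖`. -/
lemma norm_mono_of_nonneg {a b : E} (ha : 0 ≤ a) (hab : a ≤ b) : ‖a‖ ≤ ‖b‖ := by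
  refine norm_le_norm_of_abs_le_abs ?_
  rw [abs_of_nonneg ha, abs_of_nonneg (le_trans ha hab)]
  exact hab

/-- Key lemma: any set of common fixed points possessing a nonnegative LUB in `E`
has a least common-fixed upper bound, whose norm is at most `‖b₀‖`. -/
lemma key_least
    (hmc : ∀ D : Set E, D.Nonempty → DirectedOn (· ≤ ·) D → (∀ x ∈ D, 0 ≤ x) →
      (∃ C : ℝ, ∀ x ∈ D, ‖x‖ ≤ C) → ∃ b : E, IsLUB D b)
    (hfatou : ∀ (D : Set E) (b : E), D.Nonempty → DirectedOn (· ≤ ·) D →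
      (∀ x ∈ D, 0 ≤ x) → IsLUB D b → ‖b‖ = ⨆ x : D, ‖(x : E)‖)
    (hpos : ∀ i, ∀ x : E, 0 ≤ x → 0 ≤ T i x) (hcontr : ∀ i, ‖T i‖ ≤ 1)
    (hcomm : ∀ i j, (T i).comp (T j) = (T j).comp (T i))
    (D : Set E) (hfix : ∀ x ∈ D, ∀ i, T i x = x)
    (b₀ : E) (hb₀ : IsLUB D b₀) (hb₀pos : (0 : E) ≤ b₀) :
    ∃ b : E, IsLeast {h : E | (∀ i, T i h = h) ∧ ∀ x ∈ D, x ≤ h} b ∧ ‖b‖ ≤ ‖b₀‖ := by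
  set P : Set E := {y | b₀ ≤ y ∧ ‖y‖ ≤ ‖b₀‖ ∧ (∀ i, y ≤ T i y) ∧
      ∀ h : E, (∀ i, T i h = h) → (∀ x ∈ D, x ≤ h) → y ≤ h} with hP
  have hb₀P : b₀ ∈ P := by
    refine ⟨le_refl _, le_refl _, fun i => ?_, fun h hfh hub => hb₀.2 hub⟩
    exact hb₀.2 (fun x hx => (hfix x hx i) ▸ T_mono T hpos i (hb₀.1 hx))
  have hih : ∀ c ⊆ P, IsChain (· ≤ ·) c → ∀ y ∈ c, ∃ ub ∈ P, ∀ z ∈ c, z ≤ ub := by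
      intro c hcP hchain y hyc
      have hcne : c.Nonempty := ⟨y, hyc⟩
      have hcpos : ∀ z ∈ c, (0 : E) ≤ z := fun z hz => le_trans hb₀pos (hcP hz).1
      obtain ⟨s, hs⟩ := hmc c hcne hchain.directedOn hcpos
        ⟨‖b₀‖, fun z hz => (hcP hz).2.1⟩
      refine ⟨s, ⟨le_trans (hcP hyc).1 (hs.1 hyc), ?_, fun i => ?_, ?_⟩,
        fun z hz => hs.1 hz⟩
      · rw [hfatou c s hcne hchain.directedOn hcpos hs]
        exact Real.iSup_le (fun z => (hcP z.2).2.1) (norm_nonneg _)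
      · exact hs.2 (fun z hz => le_trans ((hcP hz).2.2.1 i) (T_mono T hpos i (hs.1 hz)))
      · intro h hfh hub
        exact hs.2 (fun z hz => (hcP hz).2.2.2 h hfh hub)
  obtain ⟨m, hb₀m, hmP, hmax⟩ :
      ∃ m, b₀ ≤ m ∧ m ∈ P ∧ ∀ z ∈ P, m ≤ z → z ≤ m := by
    obtain ⟨m, hxm, hmax⟩ := zorn_le_nonempty₀ P hih b₀ hb₀P
    exact ⟨m, hxm, hmax.1, fun z hz hmz => hmax.2 hz hmz⟩
  have hmpos : (0 : E) ≤ m := le_trans hb₀pos hmP.1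
  -- the orbit of m under the semigroup
  set O : Set E := Set.range (fun l : List I => apF T l m) with hO
  have hmO : m ∈ O := ⟨[], rfl⟩
  have hOge : ∀ z ∈ O, m ≤ z := by
    rintro z ⟨l, rfl⟩
    exact apF_ge T hpos hmP.2.2.1 l
  have hOpos : ∀ z ∈ O, (0 : E) ≤ z := fun z hz => le_trans hmpos (hOge z hz)
  have hOdir : DirectedOn (· ≤ ·) O := by
    rintro _ ⟨l, rfl⟩ _ ⟨l', rfl⟩
    refine ⟨apF T (l ++ l') m, ⟨l ++ l', rfl⟩, ?_, ?_⟩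
    · rw [apF_append]
      exact apF_mono T hpos l (apF_ge T hpos hmP.2.2.1 l')
    · rw [apF_append]
      refine apF_ge T hpos (fun i => ?_) l
      rw [apF_comm T hcomm]
      exact apF_mono T hpos l' (hmP.2.2.1 i)
  have hObdd : ∀ z ∈ O, ‖z‖ ≤ ‖b₀‖ := by
    rintro z ⟨l, rfl⟩
    exact le_trans (apF_norm T hcontr l m) hmP.2.1
  obtain ⟨s, hs⟩ := hmc O ⟨m, hmO⟩ hOdir hOpos ⟨‖b₀‖, hObdd⟩
  have hsP : s ∈ P := by
    refine ⟨le_trans hmP.1 (hs.1 hmO), ?_, fun i => ?_, ?_⟩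
    · rw [hfatou O s ⟨m, hmO⟩ hOdir hOpos hs]
      exact Real.iSup_le (fun z => hObdd z z.2) (norm_nonneg _)
    · refine hs.2 ?_
      rintro _ ⟨l, rfl⟩
      calc apF T l m ≤ T i (apF T l m) := by
            rw [apF_comm T hcomm]
            exact apF_mono T hpos l (hmP.2.2.1 i)
        _ ≤ T i s := T_mono T hpos i (hs.1 ⟨l, rfl⟩)
    · intro h hfh hub
      refine hs.2 ?_
      rintro _ ⟨l, rfl⟩
      calc apF T l m ≤ apF T l h := apF_mono T hpos l (hmP.2.2.2 h hfh hub)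
        _ = h := apF_fixed T hfh l
  have hsm : s = m := le_antisymm (hmax s hsP (hs.1 hmO)) (hs.1 hmO)
  have hmfix : ∀ i, T i m = m := by
    intro i
    refine le_antisymm ?_ (hmP.2.2.1 i)
    have hTm : T i m ∈ O := ⟨[i], rfl⟩
    exact (hs.1 hTm).trans hsm.le
  refine ⟨m, ⟨⟨hmfix, fun x hx => le_trans (hb₀.1 hx) hmP.1⟩, ?_⟩, hmP.2.1⟩
  intro h hh
  exact hmP.2.2.2 h hh.1 hh.2

/-- Dual key lemma: below any `y₀` with `T i y₀ ≤ y₀` that dominates some common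
fixed point, there is a greatest common fixed point. -/
lemma key_glb
    (hmc : ∀ D : Set E, D.Nonempty → DirectedOn (· ≤ ·) D → (∀ x ∈ D, 0 ≤ x) →
      (∃ C : ℝ, ∀ x ∈ D, ‖x‖ ≤ C) → ∃ b : E, IsLUB D b)
    (hpos : ∀ i, ∀ x : E, 0 ≤ x → 0 ≤ T i x)
    (hcomm : ∀ i j, (T i).comp (T j) = (T j).comp (T i))
    (y₀ x₀ : E) (hy₀ : ∀ i, T i y₀ ≤ y₀)
    (hx₀fix : ∀ i, T i x₀ = x₀) (hx₀ : x₀ ≤ y₀) :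
    ∃ m : E, (∀ i, T i m = m) ∧ m ≤ y₀ ∧
      ∀ z : E, (∀ i, T i z = z) → z ≤ y₀ → z ≤ m := by
  set Q : Set E := {y | y ≤ y₀ ∧ (∀ i, T i y ≤ y) ∧
      ∀ z : E, (∀ i, T i z = z) → z ≤ y₀ → z ≤ y} with hQ
  have hy₀Q : y₀ ∈ Q := ⟨le_refl _, hy₀, fun z _ hz => hz⟩
  have hbelow : ∀ y ∈ Q, x₀ ≤ y := fun y hy => hy.2.2 x₀ hx₀fix hx₀
  -- generic: greatest lower bound of a downward-directed subfamily of Q-like sets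
  have hglb : ∀ (S : Set E), S.Nonempty → DirectedOn (· ≥ ·) S →
      (∀ z ∈ S, x₀ ≤ z) → (∀ z ∈ S, z ≤ y₀) → ∃ s : E, IsGLB S s := by
    intro S hSne hSdir hSlb hSub
    set S' : Set E := (fun z => y₀ - z) '' S with hS'
    have hS'ne : S'.Nonempty := hSne.image _
    have hS'dir : DirectedOn (· ≤ ·) S' := by
      rintro _ ⟨a, ha, rfl⟩ _ ⟨b, hb, rfl⟩
      obtain ⟨c, hc, hca, hcb⟩ := hSdir a ha b hb
      exact ⟨y₀ - c, ⟨c, hc, rfl⟩, sub_le_sub_left hca _, sub_le_sub_left hcb _⟩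
    have hS'pos : ∀ w ∈ S', (0 : E) ≤ w := by
      rintro _ ⟨a, ha, rfl⟩
      exact sub_nonneg.2 (hSub a ha)
    have hS'bdd : ∃ C : ℝ, ∀ w ∈ S', ‖w‖ ≤ C := by
      refine ⟨‖y₀ - x₀‖, ?_⟩
      rintro _ ⟨a, ha, rfl⟩
      exact norm_mono_of_nonneg (sub_nonneg.2 (hSub a ha)) (sub_le_sub_left (hSlb a ha) _)
    obtain ⟨w, hw⟩ := hmc S' hS'ne hS'dir hS'pos hS'bdd
    refine ⟨y₀ - w, ?_, ?_⟩
    · intro a ha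
      have : y₀ - a ≤ w := hw.1 ⟨a, ha, rfl⟩
      have h2 := sub_le_sub_left this y₀
      rwa [sub_sub_cancel] at h2
    · intro v hv
      have : w ≤ y₀ - v := by
        refine hw.2 ?_
        rintro _ ⟨a, ha, rfl⟩
        exact sub_le_sub_left (hv ha) _
      have h2 := sub_le_sub_left this y₀
      rwa [sub_sub_cancel] at h2
  -- Zorn, minimizing over Q
  have hih : ∀ c ⊆ Q, IsChain (α := Eᵒᵈ) (· ≤ ·) c → ∀ y ∈ c,
      ∃ lb ∈ Q, ∀ z ∈ c, lb ≤ z := by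
      intro c hcQ hchain y hyc
      have hcdir : DirectedOn (fun a b : E => b ≤ a) c := by
        intro a ha b hb
        rcases hchain.total ha hb with h | h
        · exact ⟨b, hb, show b ≤ a from h, le_refl b⟩
        · exact ⟨a, ha, le_refl a, show a ≤ b from h⟩
      obtain ⟨s, hs⟩ := hglb c ⟨y, hyc⟩ hcdir (fun z hz => hbelow z (hcQ hz))
        (fun z hz => (hcQ hz).1)
      refine ⟨s, ⟨le_trans (hs.1 hyc) (hcQ hyc).1, fun i => ?_, ?_⟩,
        fun z hz => hs.1 hz⟩
      · refine hs.2 (fun z hz => ?_)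
        exact le_trans (T_mono T hpos i (hs.1 hz)) ((hcQ hz).2.1 i)
      · intro z hzfix hzy
        exact hs.2 (fun a ha => (hcQ ha).2.2 z hzfix hzy)
  obtain ⟨m, hmy₀, hmQ, hmin⟩ :
      ∃ m, m ≤ y₀ ∧ m ∈ Q ∧ ∀ z ∈ Q, z ≤ m → m ≤ z := by
    obtain ⟨m, hxm, hmax⟩ := zorn_le_nonempty₀ (α := Eᵒᵈ) Q hih y₀ hy₀Q
    exact ⟨m, hxm, hmax.1, fun z hz hmz => hmax.2 hz hmz⟩
  -- the orbit of m
  set O : Set E := Set.range (fun l : List I => apF T l m) with hO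
  have hmO : m ∈ O := ⟨[], rfl⟩
  have hOle : ∀ z ∈ O, z ≤ m := by
    rintro _ ⟨l, rfl⟩
    exact apF_le T hpos hmQ.2.1 l
  have hOlb : ∀ z ∈ O, x₀ ≤ z := by
    rintro _ ⟨l, rfl⟩
    have := apF_mono T hpos l (hbelow m hmQ)
    rwa [apF_fixed T hx₀fix l] at this
  have hOdir : DirectedOn (· ≥ ·) O := by
    rintro _ ⟨l, rfl⟩ _ ⟨l', rfl⟩
    refine ⟨apF T (l ++ l') m, ⟨l ++ l', rfl⟩, ?_, ?_⟩
    · rw [apF_append]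
      exact apF_mono T hpos l (apF_le T hpos hmQ.2.1 l')
    · rw [apF_append]
      refine apF_le T hpos (fun i => ?_) l
      rw [apF_comm T hcomm]
      exact apF_mono T hpos l' (hmQ.2.1 i)
  obtain ⟨s, hs⟩ := hglb O ⟨m, hmO⟩ hOdir hOlb (fun z hz => le_trans (hOle z hz) hmQ.1)
  have hsQ : s ∈ Q := by
    refine ⟨le_trans (hs.1 hmO) hmQ.1, fun i => ?_, ?_⟩
    · refine hs.2 ?_
      rintro _ ⟨l, rfl⟩
      calc T i s ≤ T i (apF T l m) := T_mono T hpos i (hs.1 ⟨l, rfl⟩)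
        _ = apF T l (T i m) := apF_comm T hcomm i l m
        _ ≤ apF T l m := apF_mono T hpos l (hmQ.2.1 i)
    · intro z hzfix hzy
      refine hs.2 ?_
      rintro _ ⟨l, rfl⟩
      have hzm : z ≤ m := hmQ.2.2 z hzfix hzy
      have := apF_mono T hpos l hzm
      rwa [apF_fixed T hzfix l] at this
  have hsm : s = m := le_antisymm (hs.1 hmO) (hmin s hsQ (hs.1 hmO))
  have hmfix : ∀ i, T i m = m := by
    intro i
    refine le_antisymm (hmQ.2.1 i) ?_
    have hTm : T i m ∈ O := ⟨[i], rfl⟩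
    exact le_trans hsm.ge (hs.1 hTm)
  exact ⟨m, hmfix, hmQ.1, fun z hzfix hzy => hmQ.2.2 z hzfix hzy⟩

end Aux

/-- Main theorem, part (c): the common fixed space `F`, with the order and norm
inherited from `E`, is itself monotonically complete and has the Fatou property;
in particular it is Dedekind complete.  (Suprema are taken within `F`, i.e. least
upper bounds among elements of `F`.) -/
theorem fixed_space_monotonically_complete_and_fatou
    {E : Type*} [NormedAddCommGroup E] [Lattice E] [HasSolidNorm E] [IsOrderedAddMonoid E] [NormedSpace ℝ E] [CompleteSpace E]
    (hmc : ∀ D : Set E, D.Nonempty → DirectedOn (· ≤ ·) D → (∀ x ∈ D, 0 ≤ x) →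
      (∃ C : ℝ, ∀ x ∈ D, ‖x‖ ≤ C) → ∃ b : E, IsLUB D b)
    (hfatou : ∀ (D : Set E) (b : E), D.Nonempty → DirectedOn (· ≤ ·) D →
      (∀ x ∈ D, 0 ≤ x) → IsLUB D b → ‖b‖ = ⨆ x : D, ‖(x : E)‖)
    {I : Type*} (T : I → E →L[ℝ] E)
    (hpos : ∀ i, ∀ x : E, 0 ≤ x → 0 ≤ T i x) (hcontr : ∀ i, ‖T i‖ ≤ 1)
    (hcomm : ∀ i j, (T i).comp (T j) = (T j).comp (T i)) :
    -- `F` is monotonically complete: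
    (∀ D : Set E, (∀ x ∈ D, ∀ i, T i x = x) → D.Nonempty → DirectedOn (· ≤ ·) D →
      (∀ x ∈ D, 0 ≤ x) → (∃ C : ℝ, ∀ x ∈ D, ‖x‖ ≤ C) →
      ∃ b : E, IsLeast {h : E | (∀ i, T i h = h) ∧ ∀ x ∈ D, x ≤ h} b) ∧
    -- `F` has the Fatou property:
    (∀ (D : Set E) (b : E), (∀ x ∈ D, ∀ i, T i x = x) → D.Nonempty →
      DirectedOn (· ≤ ·) D → (∀ x ∈ D, 0 ≤ x) →
      IsLeast {h : E | (∀ i, T i h = h) ∧ ∀ x ∈ D, x ≤ h} b →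
      ‖b‖ = ⨆ x : D, ‖(x : E)‖) ∧
    -- in particular, `F` is Dedekind complete:
    (∀ D : Set E, (∀ x ∈ D, ∀ i, T i x = x) → D.Nonempty →
      (∃ u : E, (∀ i, T i u = u) ∧ ∀ x ∈ D, x ≤ u) →
      ∃ b : E, IsLeast {h : E | (∀ i, T i h = h) ∧ ∀ x ∈ D, x ≤ h} b) := by
  -- part 1 auxiliary, with norm control
  have main : ∀ D : Set E, (∀ x ∈ D, ∀ i, T i x = x) → D.Nonempty → DirectedOn (· ≤ ·) D →
      (∀ x ∈ D, 0 ≤ x) → (∃ C : ℝ, ∀ x ∈ D, ‖x‖ ≤ C) →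
      ∃ b : E, IsLeast {h : E | (∀ i, T i h = h) ∧ ∀ x ∈ D, x ≤ h} b ∧
        ‖b‖ ≤ ⨆ x : D, ‖(x : E)‖ := by
    intro D hfix hne hdir hDpos hbdd
    obtain ⟨b₀, hb₀⟩ := hmc D hne hdir hDpos hbdd
    obtain ⟨x₀, hx₀⟩ := hne
    have hb₀pos : (0 : E) ≤ b₀ := le_trans (hDpos x₀ hx₀) (hb₀.1 hx₀)
    obtain ⟨b, hb, hbn⟩ := key_least T hmc hfatou hpos hcontr hcomm D hfix b₀ hb₀ hb₀pos
    refine ⟨b, hb, ?_⟩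
    rwa [hfatou D b₀ ⟨x₀, hx₀⟩ hdir hDpos hb₀] at hbn
  refine ⟨?_, ?_, ?_⟩
  · intro D hfix hne hdir hDpos hbdd
    obtain ⟨b, hb, -⟩ := main D hfix hne hdir hDpos hbdd
    exact ⟨b, hb⟩
  · -- Fatou for F
    intro D b hfix hne hdir hDpos hb
    obtain ⟨x₀, hx₀⟩ := hne
    have hbpos : (0 : E) ≤ b := le_trans (hDpos x₀ hx₀) (hb.1.2 x₀ hx₀)
    have hbdd : ∃ C : ℝ, ∀ x ∈ D, ‖x‖ ≤ C :=
      ⟨‖b‖, fun x hx => norm_mono_of_nonneg (hDpos x hx) (hb.1.2 x hx)⟩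
    obtain ⟨c, hc, hcn⟩ := main D hfix ⟨x₀, hx₀⟩ hdir hDpos hbdd
    have hbc : b = c := hb.unique hc
    refine le_antisymm (hbc ▸ hcn) ?_
    exact Real.iSup_le
      (fun x => norm_mono_of_nonneg (hDpos x x.2) (hb.1.2 x x.2)) (norm_nonneg _)
  · -- Dedekind completeness of F
    intro D hfix hne hu
    obtain ⟨u, hufix, huub⟩ := hu
    obtain ⟨x₀, hx₀⟩ := hne
    have hx₀fix : ∀ i, T (i : I) x₀ = x₀ := hfix x₀ hx₀
    set U : Set E := {h | (∀ i, T i h = h) ∧ ∀ x ∈ D, x ≤ h} with hU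
    have huU : u ∈ U := ⟨hufix, huub⟩
    -- U is downward directed
    have hpair : ∀ h ∈ U, ∀ h' ∈ U, ∃ v ∈ U, v ≤ h ∧ v ≤ h' := by
      intro h hh h' hh'
      have hy₀ : ∀ i, T i (h ⊓ h') ≤ h ⊓ h' := by
        intro i
        have h1 := T_mono T hpos i (inf_le_left (a := h) (b := h'))
        have h2 := T_mono T hpos i (inf_le_right (a := h) (b := h'))
        rw [hh.1 i] at h1
        rw [hh'.1 i] at h2
        exact le_inf h1 h2
      have hx₀y : x₀ ≤ h ⊓ h' := le_inf (hh.2 x₀ hx₀) (hh'.2 x₀ hx₀)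
      obtain ⟨v, hvfix, hvy, hvgr⟩ := key_glb T hmc hpos hcomm (h ⊓ h') x₀ hy₀ hx₀fix hx₀y
      refine ⟨v, ⟨hvfix, fun x hx => ?_⟩, le_trans hvy inf_le_left,
        le_trans hvy inf_le_right⟩
      exact hvgr x (hfix x hx) (le_inf (hh.2 x hx) (hh'.2 x hx))
    -- consider W = u - (U ∩ (-∞, u])
    set W : Set E := (fun h => u - h) '' {h | h ∈ U ∧ h ≤ u} with hW
    have hWfix : ∀ w ∈ W, ∀ i, T i w = w := by
      rintro _ ⟨h, hh, rfl⟩ i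
      rw [map_sub, hufix i, hh.1.1 i]
    have hWne : W.Nonempty := ⟨u - u, u, ⟨huU, le_refl _⟩, rfl⟩
    have hWpos : ∀ w ∈ W, (0 : E) ≤ w := by
      rintro _ ⟨h, hh, rfl⟩
      exact sub_nonneg.2 hh.2
    have hWdir : DirectedOn (· ≤ ·) W := by
      rintro _ ⟨h, hh, rfl⟩ _ ⟨h', hh', rfl⟩
      obtain ⟨v, hvU, hvh, hvh'⟩ := hpair h hh.1 h' hh'.1
      obtain ⟨v₂, hv₂U, hv₂v, hv₂u⟩ := hpair v hvU u huU
      exact ⟨u - v₂, ⟨v₂, ⟨hv₂U, hv₂u⟩, rfl⟩,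
        sub_le_sub_left (le_trans hv₂v hvh) _, sub_le_sub_left (le_trans hv₂v hvh') _⟩
    have hWbdd : ∃ C : ℝ, ∀ w ∈ W, ‖w‖ ≤ C := by
      refine ⟨‖u - x₀‖, ?_⟩
      rintro _ ⟨h, hh, rfl⟩
      exact norm_mono_of_nonneg (sub_nonneg.2 hh.2) (sub_le_sub_left (hh.1.2 x₀ hx₀) _)
    obtain ⟨g₀, hg₀⟩ := hmc W hWne hWdir hWpos hWbdd
    have hg₀pos : (0 : E) ≤ g₀ := by
      obtain ⟨w, hw⟩ := hWne
      exact le_trans (hWpos w hw) (hg₀.1 hw)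
    obtain ⟨g, hg, -⟩ := key_least T hmc hfatou hpos hcontr hcomm W hWfix g₀ hg₀ hg₀pos
    refine ⟨u - g, ⟨⟨fun i => by rw [map_sub, hufix i, hg.1.1 i], fun x hx => ?_⟩, ?_⟩⟩
    · -- x ≤ u - g since u - x is a fixed upper bound of W
      have hgux : g ≤ u - x := by
        refine hg.2 ⟨fun i => by rw [map_sub, hufix i, hfix x hx i], ?_⟩
        rintro _ ⟨h, hh, rfl⟩
        exact sub_le_sub_left (hh.1.2 x hx) _
      have h2 := sub_le_sub_left hgux u
      rwa [sub_sub_cancel] at h2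
    · -- least: u - g ≤ any fixed upper bound h
      intro h hh
      obtain ⟨v, hvU, hvh, hvu⟩ := hpair h hh u huU
      have huv : u - v ≤ g := hg.1.2 (u - v) ⟨v, ⟨hvU, hvu⟩, rfl⟩
      have h2 := sub_le_sub_left huv u
      rw [sub_sub_cancel] at h2
      exact le_trans h2 hvh
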